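/- Let G be a graph with all vertex degrees at most d, and let o be a fixed vertex. Then the number of subsets S of vertices with |S| = n, o ∈ S, and S inducing a connected subgraph of G, is at most d^(2n). -/

import Mathlib

open SimpleGraph

universe u

/-- Counting walks: at most `d ^ L` walks of length `L` from a vertex, if degrees `≤ d`. -/
lemma aux_walk_count {V : Type*} [DecidableEq V] (G : SimpleGraph V) [G.LocallyFinite]
    (d : ℕ) (hdeg : ∀ v, G.degree v ≤ d) (L : ℕ) :
    ∀ u v : V, (G.finsetWalkLength L u v).card ≤ d ^ L := by
  induction L with
  | zero =>
    intro u v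
    by_cases h : u = v
    · subst h; simp [finsetWalkLength]
    · simp [finsetWalkLength, h]
  | succ L ih =>
    intro u v
    have : G.finsetWalkLength (L + 1) u v =
        Finset.univ.biUnion fun (w : G.neighborSet u) =>
          (G.finsetWalkLength L w v).map ⟨fun p => Walk.cons w.property p, fun _ _ h => by cases h; rfl⟩ :=
      rfl
    rw [this]
    refine (Finset.card_biUnion_le).trans ?_
    calc (∑ w : G.neighborSet u,
            ((G.finsetWalkLength L w v).map
              ⟨fun p => Walk.cons w.property p, fun _ _ h => by cases h; rfl⟩).card)
        ≤ ∑ _w : G.neighborSet u, d ^ L := by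
          refine Finset.sum_le_sum fun i _ => ?_
          rw [Finset.card_map]; exact ih i v
      _ = Fintype.card (G.neighborSet u) * d ^ L := by
          rw [Finset.sum_const, Finset.card_univ, smul_eq_mul]
      _ ≤ d * d ^ L := by
          gcongr
          rw [G.card_neighborSet_eq_degree]; exact hdeg u
      _ = d ^ (L + 1) := by ring

/-- A walk whose support stays inside `s` yields reachability in the induced graph. -/
lemma aux_reach_induce {V : Type*} (G : SimpleGraph V) (s : Set V) :
    ∀ {a b : V} (p : G.Walk a b) (ha : a ∈ s) (hb : b ∈ s)
      (_hp : ∀ x ∈ p.support, x ∈ s),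
      (G.induce s).Reachable ⟨a, ha⟩ ⟨b, hb⟩ := by
  intro a b p
  induction p with
  | nil => intro ha hb _; rfl
  | @cons a c b h q ih =>
    intro ha hb hp
    have hc : c ∈ s := hp c (by simp)
    have h1 : (G.induce s).Adj ⟨a, ha⟩ ⟨c, hc⟩ := h
    exact h1.reachable.trans (ih hc hb fun x hx => hp x (by simp [hx]))

/-- Every finite connected graph has a closed walk of length `2 * (card - 1)` from any
vertex visiting every vertex. -/
lemma aux_spanning_walk : ∀ (k : ℕ) {W : Type u} [Fintype W] (H : SimpleGraph W)
    (hc : H.Connected) (u : W), Nat.card W = k →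
    ∃ w : H.Walk u u, w.length = 2 * (k - 1) ∧ ∀ v, v ∈ w.support := by
  intro k
  induction k using Nat.strong_induction_on with
  | _ k IH =>
    intro W _ H hc u hcard
    classical
    rw [Nat.card_eq_fintype_card] at hcard
    rcases le_or_gt k 1 with hk | hk
    · -- singleton case
      have hsub : Subsingleton W := by
        refine Fintype.card_le_one_iff_subsingleton.mp ?_
        omega
      have hpos : 0 < Fintype.card W := @Fintype.card_pos _ _ hc.nonempty
      refine ⟨Walk.nil, by simp [Walk.length_nil]; omega, fun v => ?_⟩
      simp [Subsingleton.elim v u]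
    · -- pick v at maximal distance from u
      obtain ⟨v, _, hvmax⟩ :=
        Finset.exists_max_image (Finset.univ : Finset W) (fun x => H.dist u x)
          ⟨u, Finset.mem_univ u⟩
      have hvmax : ∀ x : W, H.dist u x ≤ H.dist u v := fun x => hvmax x (Finset.mem_univ x)
      have hex : ∃ y : W, y ≠ u := by
        have : 1 < Fintype.card W := by omega
        obtain ⟨y, hy⟩ := Fintype.exists_ne_of_one_lt_card this u
        exact ⟨y, hy⟩
      obtain ⟨y, hy⟩ := hex
      have hdy : 0 < H.dist u y := hc.pos_dist_of_ne (Ne.symm hy)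
      have hdv : 0 < H.dist u v := lt_of_lt_of_le hdy (hvmax y)
      have hvu : v ≠ u := by
        intro h
        rw [h, SimpleGraph.dist_self] at hdv
        exact Nat.lt_irrefl 0 hdv
      set s : Set W := {x | x ≠ v} with hs
      have hus : u ∈ s := Ne.symm hvu
      -- s avoids v, and every x ∈ s is reachable from u within s
      have key : ∀ x : W, x ∈ s → ∃ p : H.Walk u x, ∀ z ∈ p.support, z ∈ s := by
        intro x hx
        obtain ⟨p, hp⟩ := hc.exists_walk_length_eq_dist u x
        refine ⟨p, fun z hz => ?_⟩
        by_contra hzv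
        have hzv : z = v := by simpa [hs] using hzv
        subst hzv
        have hsplit := p.take_spec hz
        have hlen : (p.takeUntil z hz).length + (p.dropUntil z hz).length = p.length := by
          have := congrArg Walk.length hsplit
          rwa [Walk.length_append] at this
        have h1 : H.dist u z ≤ (p.takeUntil z hz).length := H.dist_le _
        have h2 : H.dist z x ≤ (p.dropUntil z hz).length := H.dist_le _
        have h3 : 0 < H.dist z x := hc.pos_dist_of_ne (fun h => hx (by simp [hs, ← h]))
        have h4 : H.dist u x ≤ H.dist u z := hvmax x
        omega
      have hFin : Fintype ↥s := Fintype.ofFinite _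
      have hcard' : Nat.card ↥s = k - 1 := by
        have : Nat.card ↥s = Nat.card {x : W // ¬ (x = v)} := rfl
        rw [this, Nat.card_eq_fintype_card, Fintype.card_subtype_compl,
          Fintype.card_subtype_eq, hcard]
      -- induced graph on s is connected
      have hconn' : (H.induce s).Connected := by
        rw [connected_iff]
        refine ⟨fun a b => ?_, ⟨⟨u, hus⟩⟩⟩
        have ra : (H.induce s).Reachable ⟨u, hus⟩ a := by
          obtain ⟨p, hp⟩ := key a.1 a.2
          have := aux_reach_induce H s p hus a.2 hp
          convert this using 1
        have rb : (H.induce s).Reachable ⟨u, hus⟩ b := by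
          obtain ⟨p, hp⟩ := key b.1 b.2
          have := aux_reach_induce H s p hus b.2 hp
          convert this using 1
        exact ra.symm.trans rb
      obtain ⟨w', hw'len, hw'cov⟩ := IH (k - 1) (by omega) (H.induce s) hconn' ⟨u, hus⟩ hcard'
      -- map back to H
      let f : H.induce s ↪g H := SimpleGraph.Embedding.induce s
      let w₀ : H.Walk u u := w'.map f.toHom
      have hw₀len : w₀.length = 2 * (k - 1 - 1) := by
        exact (Walk.length_map f.toHom w').trans hw'len
      have hw₀cov : ∀ x : W, x ≠ v → x ∈ w₀.support := by
        intro x hx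
        have : (⟨x, hx⟩ : ↥s) ∈ w'.support := hw'cov _
        have : f ⟨x, hx⟩ ∈ (w'.map f.toHom).support := by
          rw [Walk.support_map]
          exact List.mem_map_of_mem this
        exact this
      -- v has a neighbor c ≠ v
      obtain ⟨c, hadj⟩ : ∃ c : W, H.Adj v c := by
        obtain ⟨p⟩ := hc.preconnected v u
        cases p with
        | nil => exact absurd rfl hvu
        | cons h q => exact ⟨_, h⟩
      have hcv : c ≠ v := hadj.ne'
      have hcmem : c ∈ w₀.support := hw₀cov c hcv
      set t := w₀.takeUntil c hcmem with ht
      set dr := w₀.dropUntil c hcmem with hdr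
      have hsplit : t.append dr = w₀ := w₀.take_spec hcmem
      have hlen0 : t.length + dr.length = w₀.length := by
        have := congrArg Walk.length hsplit
        rwa [Walk.length_append] at this
      refine ⟨t.append (Walk.cons hadj.symm (Walk.cons hadj dr)), ?_, ?_⟩
      · rw [Walk.length_append, Walk.length_cons, Walk.length_cons]
        omega
      · intro z
        rw [Walk.mem_support_append_iff]
        by_cases hz : z = v
        · subst hz; right; simp
        · have : z ∈ (t.append dr).support := hsplit ▸ hw₀cov z hz
          rw [Walk.mem_support_append_iff] at this
          rcases this with h | h
          · exact Or.inl h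
          · right; simp only [Walk.support_cons, List.mem_cons]
            right; right; exact h

/-- Key: each admissible set gives a closed walk of length `2*(n-1)` whose support is the set. -/
lemma aux_set_to_walk {V : Type*} (G : SimpleGraph V) (o : V) (n : ℕ)
    (S : Finset V) (ho : o ∈ S) (hcard : S.card = n)
    (hconn : (G.induce (S : Set V)).Connected) :
    ∃ w : G.Walk o o, w.length = 2 * (n - 1) ∧ ∀ x, x ∈ w.support ↔ x ∈ S := by
  classical
  have hos : o ∈ (S : Set V) := ho
  have hcard' : Nat.card ↥(S : Set V) = n := by
    rw [Nat.card_coe_set_eq, Set.ncard_coe_finset, hcard]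
  obtain ⟨w', hlen, hcov⟩ :=
    aux_spanning_walk n (G.induce (S : Set V)) hconn ⟨o, hos⟩ hcard'
  let f : G.induce (S : Set V) ↪g G := SimpleGraph.Embedding.induce (S : Set V)
  refine ⟨w'.map f.toHom, (Walk.length_map f.toHom w').trans hlen, fun x => ?_⟩
  change x ∈ (w'.map f.toHom).support ↔ x ∈ S
  rw [Walk.support_map, List.mem_map]
  constructor
  · rintro ⟨y, _, rfl⟩
    exact y.2
  · intro hx
    exact ⟨⟨x, hx⟩, hcov _, rfl⟩

/-- In a graph with all degrees at most `d`, the number of `n`-element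
vertex sets containing `o` that induce a connected subgraph is at most `d ^ (2 n)`. -/
theorem stmt0 {V : Type*} (G : SimpleGraph V)
    [∀ v, Fintype (G.neighborSet v)] (d : ℕ) (hd : 1 ≤ d)
    (hdeg : ∀ v, G.degree v ≤ d) (o : V) (n : ℕ) (hn : 0 < n) :
    {S : Finset V | o ∈ S ∧ S.card = n ∧ (G.induce (S : Set V)).Connected}.Finite ∧
    {S : Finset V | o ∈ S ∧ S.card = n ∧ (G.induce (S : Set V)).Connected}.ncard
      ≤ d ^ (2 * n) := by
  classical
  set A := {S : Finset V | o ∈ S ∧ S.card = n ∧ (G.induce (S : Set V)).Connected} with hA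
  have key : ∀ S ∈ A, ∃ w : G.Walk o o,
      w.length = 2 * (n - 1) ∧ ∀ x, x ∈ w.support ↔ x ∈ S := by
    rintro S ⟨h1, h2, h3⟩
    exact aux_set_to_walk G o n S h1 h2 h3
  -- injection into walks of length 2*(n-1)
  let f : ↥A → {w : G.Walk o o // w.length = 2 * (n - 1)} := fun S =>
    ⟨(key S.1 S.2).choose, (key S.1 S.2).choose_spec.1⟩
  have hf : Function.Injective f := by
    intro S₁ S₂ h
    have h1 := (key S₁.1 S₁.2).choose_spec.2
    have h2 := (key S₂.1 S₂.2).choose_spec.2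
    have heq : (key S₁.1 S₁.2).choose = (key S₂.1 S₂.2).choose := congrArg Subtype.val h
    apply Subtype.ext
    ext x
    rw [← h1 x, heq, h2 x]
  have hfin : Finite ↥A := Finite.of_injective f hf
  constructor
  · exact Set.finite_coe_iff.mp hfin
  · have h1 : A.ncard = Nat.card ↥A := (Nat.card_coe_set_eq A).symm
    have h2 : Nat.card ↥A ≤ Nat.card {w : G.Walk o o // w.length = 2 * (n - 1)} :=
      Nat.card_le_card_of_injective f hf
    have h3 : Nat.card {w : G.Walk o o // w.length = 2 * (n - 1)} =
        (G.finsetWalkLength (2 * (n - 1)) o o).card := by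
      rw [Nat.card_eq_fintype_card]
      exact G.card_set_walk_length_eq o o (2 * (n - 1))
    have h4 := aux_walk_count G d hdeg (2 * (n - 1)) o o
    have h5 : d ^ (2 * (n - 1)) ≤ d ^ (2 * n) :=
      Nat.pow_le_pow_right hd (by omega)
    omega
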